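/- In a composed LTS M ⊎ N where: tick-transitions of the composite arise exactly from simultaneous tick-transitions of both components, and any non-tick transition of the composite not due to a channel synchronisation arises from exactly one component (the other staying fixed), the following decomposition holds: if M ⊎ N performs a trace t, then there exist traces t_M of M and t_N of N with #tick(t_M) = #tick(t_N) = #tick(t), whose interleaving (identifying the synchronized pairs) yields t. -/
import Mathlib


/-- Finite execution traces of a labelled transition system. -/
inductive Trace {S A : Type*} (step : S → A → S → Prop) : S → List A → S → Prop
  | nil (s : S) : Trace step s [] s
  | cons {s : S} {a : A} {s' : S} {t : List A} {s'' : S} :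
      step s a s' → Trace step s' t s'' → Trace step s (a :: t) s''

/-- Parallel composition of two physically-disjoint systems: `tick` is performed
simultaneously by both components, complementary actions (related by `comp`)
synchronise into `τ`, and any other action is performed by exactly one component. -/
inductive CompStep {S1 S2 A : Type*} (step1 : S1 → A → S1 → Prop)
    (step2 : S2 → A → S2 → Prop) (tick τ : A) (comp : A → A → Prop) :
    S1 × S2 → A → S1 × S2 → Prop
  | tickStep {m m' : S1} {n n' : S2} :
      step1 m tick m' → step2 n tick n' →
      CompStep step1 step2 tick τ comp (m, n) tick (m', n')
  | left {a : A} {m m' : S1} {n : S2} :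
      a ≠ tick → step1 m a m' →
      CompStep step1 step2 tick τ comp (m, n) a (m', n)
  | right {a : A} {m : S1} {n n' : S2} :
      a ≠ tick → step2 n a n' →
      CompStep step1 step2 tick τ comp (m, n) a (m, n')
  | sync {a b : A} {m m' : S1} {n n' : S2} :
      comp a b → step1 m a m' → step2 n b n' →
      CompStep step1 step2 tick τ comp (m, n) τ (m', n')

/-- Interleaving of two component traces into a composite trace: `tick` is taken
simultaneously from both, synchronised pairs (identified by `comp`) produce a `τ`,
and other actions are interleaved. -/
inductive Mix {A : Type*} (tick τ : A) (comp : A → A → Prop) :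
    List A → List A → List A → Prop
  | nil : Mix tick τ comp [] [] []
  | tickStep {tM tN t : List A} :
      Mix tick τ comp tM tN t → Mix tick τ comp (tick :: tM) (tick :: tN) (tick :: t)
  | left {a : A} {tM tN t : List A} :
      a ≠ tick → Mix tick τ comp tM tN t → Mix tick τ comp (a :: tM) tN (a :: t)
  | right {a : A} {tM tN t : List A} :
      a ≠ tick → Mix tick τ comp tM tN t → Mix tick τ comp tM (a :: tN) (a :: t)
  | sync {a b : A} {tM tN t : List A} :
      comp a b → Mix tick τ comp tM tN t →
      Mix tick τ comp (a :: tM) (b :: tN) (τ :: t)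

/-- Decomposition of composite traces: any trace `t` of `M ⊎ N` arises as the
interleaving (identifying the synchronised pairs) of a trace of `M` and a trace
of `N`, both with the same number of `tick`s as `t`. -/
theorem stmt_13 {S1 S2 A : Type*} [DecidableEq A]
    (step1 : S1 → A → S1 → Prop) (step2 : S2 → A → S2 → Prop)
    (tick τ : A) (comp : A → A → Prop)
    (hττ : τ ≠ tick) (hcomp : ∀ a b, comp a b → a ≠ tick ∧ b ≠ tick)
    (p : S1 × S2) (t : List A) (p' : S1 × S2)
    (h : Trace (CompStep step1 step2 tick τ comp) p t p') :
    ∃ tM tN : List A,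
      Trace step1 p.1 tM p'.1 ∧ Trace step2 p.2 tN p'.2 ∧
      Mix tick τ comp tM tN t ∧
      tM.count tick = t.count tick ∧ tN.count tick = t.count tick := by
  induction h with
  | nil s => exact ⟨[], [], .nil _, .nil _, .nil, rfl, rfl⟩
  | cons hstep _ ih =>
    obtain ⟨tM, tN, h1, h2, hmix, c1, c2⟩ := ih
    cases hstep with
    | tickStep s1 s2 =>
      exact ⟨tick :: tM, tick :: tN, .cons s1 h1, .cons s2 h2, .tickStep hmix,
        by simp [List.count_cons, c1], by simp [List.count_cons, c2]⟩
    | left hne s1 =>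
      exact ⟨_ :: tM, tN, .cons s1 h1, h2, .left hne hmix,
        by simp [List.count_cons, c1], by simp [List.count_cons, c2, hne]⟩
    | right hne s2 =>
      exact ⟨tM, _ :: tN, h1, .cons s2 h2, .right hne hmix,
        by simp [List.count_cons, c1, hne], by simp [List.count_cons, c2]⟩
    | sync hc s1 s2 =>
      obtain ⟨ha, hb⟩ := hcomp _ _ hc
      exact ⟨_ :: tM, _ :: tN, .cons s1 h1, .cons s2 h2, .sync hc hmix,
        by simp [List.count_cons, c1, ha, hττ], by simp [List.count_cons, c2, hb, hττ]⟩
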